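/- Let σ, k, r be continuous on (0,∞) with σ > 0, r ≥ 0, and λ < inf r. Let h_b and h_c be two C² solutions of (1/2)σ²h'' + kh' - rh = -λh on (0,∞) with h_b(ξ) = h_c(ξ) = 1 and h_c'(ξ) = c < b = h_b'(ξ). Then h_b(x) > h_c(x) for all x > ξ and h_b(x) < h_c(x) for all 0 < x < ξ. -/

import Mathlib

open Set Filter Topology

lemma slope_signs {f : ℝ → ℝ} {x d : ℝ} (hf : HasDerivAt f d x) (hd : 0 < d) :
    (∀ᶠ y in 𝓝[>] x, f x < f y) ∧ (∀ᶠ y in 𝓝[<] x, f y < f x) := by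
  have hs := hasDerivAt_iff_tendsto_slope.mp hf
  have hpos : ∀ᶠ y in 𝓝[≠] x, 0 < slope f x y := hs.eventually (eventually_gt_nhds hd)
  constructor
  · have h1 : ∀ᶠ y in 𝓝[>] x, 0 < slope f x y :=
      hpos.filter_mono (nhdsWithin_mono x fun y hy => ne_of_gt hy)
    filter_upwards [h1, self_mem_nhdsWithin] with y hy hxy
    have hyx : (0:ℝ) < y - x := sub_pos.mpr hxy
    rw [slope_def_field, div_pos_iff] at hy
    rcases hy with ⟨h, _⟩ | ⟨_, h⟩
    · linarith
    · linarith
  · have h1 : ∀ᶠ y in 𝓝[<] x, 0 < slope f x y :=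
      hpos.filter_mono (nhdsWithin_mono x fun y hy => ne_of_lt hy)
    filter_upwards [h1, self_mem_nhdsWithin] with y hy hxy
    have hyx : y - x < 0 := sub_neg.mpr hxy
    rw [slope_def_field, div_pos_iff] at hy
    rcases hy with ⟨_, h⟩ | ⟨h, _⟩
    · linarith
    · linarith

lemma deriv2_nonpos_of_isLocalMax {f : ℝ → ℝ} {m : ℝ}
    (hf : ∀ᶠ x in 𝓝 m, DifferentiableAt ℝ f x)
    (hf' : DifferentiableAt ℝ (deriv f) m) (hmax : IsLocalMax f m) :
    deriv (deriv f) m ≤ 0 := by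
  by_contra h
  push_neg at h
  have hd0 : deriv f m = 0 := hmax.deriv_eq_zero
  have hslope := (slope_signs hf'.hasDerivAt h).1
  rw [hd0] at hslope
  obtain ⟨ε1, hε1, H1⟩ := Metric.eventually_nhds_iff.mp (hf.and hmax)
  obtain ⟨u, hu, H3⟩ := mem_nhdsGT_iff_exists_Ioo_subset.mp hslope
  set t := min u (m + ε1 / 2) with ht
  have htm : m < t := lt_min hu (by linarith)
  have hsub : Icc m t ⊆ Metric.ball m ε1 := by
    intro y hy
    rw [Metric.mem_ball, Real.dist_eq, abs_lt]
    constructor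
    · linarith [hy.1]
    · have := hy.2
      have : y ≤ m + ε1 / 2 := le_trans this (min_le_right _ _)
      linarith
  have hcont : ContinuousOn f (Icc m t) := fun y hy =>
    ((H1 (Metric.mem_ball.mp (hsub hy))).1.continuousAt).continuousWithinAt
  have hderiv : ∀ y ∈ interior (Icc m t), 0 < deriv f y := by
    rw [interior_Icc]
    intro y hy
    exact H3 ⟨hy.1, lt_of_lt_of_le hy.2 (min_le_left _ _)⟩
  have hmono := strictMonoOn_of_deriv_pos (convex_Icc m t) hcont hderiv
  have : f m < f t := hmono (left_mem_Icc.mpr htm.le) (right_mem_Icc.mpr htm.le) htm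
  have : f t ≤ f m := (H1 (Metric.mem_ball.mp (hsub (right_mem_Icc.mpr htm.le)))).2
  linarith

lemma deriv2_nonneg_of_isLocalMin {f : ℝ → ℝ} {m : ℝ}
    (hf : ∀ᶠ x in 𝓝 m, DifferentiableAt ℝ f x)
    (hf' : DifferentiableAt ℝ (deriv f) m) (hmin : IsLocalMin f m) :
    0 ≤ deriv (deriv f) m := by
  have hneg : deriv (fun x => -f x) = fun x => -deriv f x := by
    funext x; exact deriv.neg
  have h := deriv2_nonpos_of_isLocalMax (f := fun x => -f x) (m := m)
    (hf.mono fun x hx => hx.neg) (by rw [hneg]; exact hf'.neg) hmin.neg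
  rw [hneg] at h
  have : deriv (fun x => -deriv f x) m = -deriv (deriv f) m := deriv.neg
  rw [this] at h
  linarith


/-- Ordering of solutions by initial derivative: if `h_c'(ξ) = c < b = h_b'(ξ)`
then `h_b > h_c` right of `ξ` and `h_b < h_c` left of `ξ`. -/
theorem order_by_initial_derivative
    (σ k r : ℝ → ℝ) (lam : ℝ) (ξ : ℝ) (hξ : 0 < ξ)
    (hσc : ContinuousOn σ (Ioi 0)) (hkc : ContinuousOn k (Ioi 0))
    (hrc : ContinuousOn r (Ioi 0))
    (hσ : ∀ x ∈ Ioi (0:ℝ), 0 < σ x)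
    (hr : ∀ x ∈ Ioi (0:ℝ), 0 ≤ r x)
    (hlam : lam < ⨅ x : Ioi (0:ℝ), r x)
    (hb hc : ℝ → ℝ) (b c : ℝ) (hcb : c < b)
    (hhb : ContDiffOn ℝ 2 hb (Ioi 0)) (hhc : ContDiffOn ℝ 2 hc (Ioi 0))
    (hodeb : ∀ x ∈ Ioi (0:ℝ),
      (1/2) * (σ x)^2 * deriv (deriv hb) x + k x * deriv hb x - r x * hb x
        = -lam * hb x)
    (hodec : ∀ x ∈ Ioi (0:ℝ),
      (1/2) * (σ x)^2 * deriv (deriv hc) x + k x * deriv hc x - r x * hc x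
        = -lam * hc x)
    (hb1 : hb ξ = 1) (hc1 : hc ξ = 1)
    (hb' : deriv hb ξ = b) (hc' : deriv hc ξ = c) :
    (∀ x, ξ < x → hc x < hb x) ∧ (∀ x, 0 < x → x < ξ → hb x < hc x) := by
  set g : ℝ → ℝ := fun x => hb x - hc x with hgdef
  -- differentiability
  have hbd : ∀ x ∈ Ioi (0:ℝ), DifferentiableAt ℝ hb x := fun x hx =>
    (hhb.contDiffAt (isOpen_Ioi.mem_nhds hx)).differentiableAt (by norm_num)
  have hcd : ∀ x ∈ Ioi (0:ℝ), DifferentiableAt ℝ hc x := fun x hx =>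
    (hhc.contDiffAt (isOpen_Ioi.mem_nhds hx)).differentiableAt (by norm_num)
  have hbD : ContDiffOn ℝ 1 (deriv hb) (Ioi 0) :=
    hhb.deriv_of_isOpen isOpen_Ioi (by norm_num)
  have hcD : ContDiffOn ℝ 1 (deriv hc) (Ioi 0) :=
    hhc.deriv_of_isOpen isOpen_Ioi (by norm_num)
  have hbd' : ∀ x ∈ Ioi (0:ℝ), DifferentiableAt ℝ (deriv hb) x := fun x hx =>
    (hbD.contDiffAt (isOpen_Ioi.mem_nhds hx)).differentiableAt one_ne_zero
  have hcd' : ∀ x ∈ Ioi (0:ℝ), DifferentiableAt ℝ (deriv hc) x := fun x hx =>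
    (hcD.contDiffAt (isOpen_Ioi.mem_nhds hx)).differentiableAt one_ne_zero
  have hgd : ∀ x ∈ Ioi (0:ℝ), DifferentiableAt ℝ g x := fun x hx =>
    (hbd x hx).sub (hcd x hx)
  have hg' : ∀ x ∈ Ioi (0:ℝ), deriv g x = deriv hb x - deriv hc x := fun x hx =>
    deriv_sub (hbd x hx) (hcd x hx)
  have heqd : ∀ x ∈ Ioi (0:ℝ),
      deriv g =ᶠ[nhds x] fun y => deriv hb y - deriv hc y := by
    intro x hx
    filter_upwards [isOpen_Ioi.mem_nhds hx] with y hy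
    exact deriv_sub (hbd y hy) (hcd y hy)
  have hg'' : ∀ x ∈ Ioi (0:ℝ),
      deriv (deriv g) x = deriv (deriv hb) x - deriv (deriv hc) x := by
    intro x hx
    rw [(heqd x hx).deriv_eq, deriv_fun_sub (hbd' x hx) (hcd' x hx)]
  have hgdd : ∀ x ∈ Ioi (0:ℝ), DifferentiableAt ℝ (deriv g) x := by
    intro x hx
    exact (heqd x hx).symm.differentiableAt_iff.mp ((hbd' x hx).sub (hcd' x hx))
  -- spectral gap
  have rlam : ∀ x ∈ Ioi (0:ℝ), lam < r x := by
    intro x hx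
    refine lt_of_lt_of_le hlam (ciInf_le ⟨0, ?_⟩ (⟨x, hx⟩ : Ioi (0:ℝ)))
    rintro y ⟨⟨z, hz⟩, rfl⟩
    exact hr z hz
  -- key identity at critical points
  have key : ∀ m ∈ Ioi (0:ℝ), deriv g m = 0 →
      (1/2) * (σ m)^2 * deriv (deriv g) m = (r m - lam) * g m := by
    intro m hm h0
    have hBC : deriv hb m = deriv hc m := by
      have := hg' m hm; rw [h0] at this; linarith
    rw [hg'' m hm]
    show (1/2) * (σ m)^2 * (deriv (deriv hb) m - deriv (deriv hc) m)
      = (r m - lam) * (hb m - hc m)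
    linear_combination hodeb m hm - hodec m hm - k m * hBC
  -- initial data
  have hgξ : g ξ = 0 := by simp [hgdef, hb1, hc1]
  have hξ0 : ξ ∈ Ioi (0:ℝ) := hξ
  have hgder : HasDerivAt g (b - c) ξ := by
    have := ((hbd ξ hξ0).hasDerivAt.sub (hcd ξ hξ0).hasDerivAt)
    rwa [hb', hc'] at this
  obtain ⟨hsR, hsL⟩ := slope_signs hgder (by linarith)
  rw [hgξ] at hsR hsL
  -- the local-max contradiction machine
  have contra : ∀ m ∈ Ioi (0:ℝ), ¬ (IsLocalMax g m ∧ 0 < g m) := by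
    rintro m hm ⟨hloc, hgm⟩
    have hd0 : deriv g m = 0 := hloc.deriv_eq_zero
    have hdd : deriv (deriv g) m ≤ 0 :=
      deriv2_nonpos_of_isLocalMax
        (by filter_upwards [isOpen_Ioi.mem_nhds hm] with z hz; exact hgd z hz)
        (hgdd m hm) hloc
    have hkey := key m hm hd0
    have hrl := rlam m hm
    have hσm := hσ m hm
    have h1 : 0 < (r m - lam) * g m := mul_pos (sub_pos.mpr hrl) hgm
    have h2 : (1/2) * (σ m)^2 * deriv (deriv g) m ≤ 0 :=
      mul_nonpos_of_nonneg_of_nonpos (by positivity) hdd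
    clear_value g
    linarith [hkey, h1, h2]
  have contra' : ∀ m ∈ Ioi (0:ℝ), ¬ (IsLocalMin g m ∧ g m < 0) := by
    rintro m hm ⟨hloc, hgm⟩
    have hd0 : deriv g m = 0 := hloc.deriv_eq_zero
    have hdd : 0 ≤ deriv (deriv g) m :=
      deriv2_nonneg_of_isLocalMin
        (by filter_upwards [isOpen_Ioi.mem_nhds hm] with z hz; exact hgd z hz)
        (hgdd m hm) hloc
    have hkey := key m hm hd0
    have hrl := rlam m hm
    have hσm := hσ m hm
    have h1 : 0 < (r m - lam) * (-(g m)) := mul_pos (sub_pos.mpr hrl) (by linarith)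
    have h2 : 0 ≤ (1/2) * (σ m)^2 * deriv (deriv g) m :=
      mul_nonneg (by positivity) hdd
    clear_value g
    linarith [hkey, h1, h2]
  -- right of ξ
  have right : ∀ x, ξ < x → 0 < g x := by
    by_contra hcon
    push_neg at hcon
    obtain ⟨x₀, hx₀, hx₀g⟩ := hcon
    obtain ⟨u, hu, H3⟩ := mem_nhdsGT_iff_exists_Ioo_subset.mp hsR
    set y := (ξ + min u x₀)/2 with hy
    have hmin : ξ < min u x₀ := lt_min hu hx₀
    have hξy : ξ < y := by simp only [hy]; linarith
    have hyu : y < u := by have := min_le_left u x₀; simp only [hy]; linarith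
    have hyx0 : y < x₀ := by have := min_le_right u x₀; simp only [hy]; linarith
    have hgy : 0 < g y := H3 ⟨hξy, hyu⟩
    have hgc : ContinuousOn g (Icc y x₀) := fun z hz =>
      (hgd z (by simp only [mem_Ioi]; linarith [hz.1])).continuousAt.continuousWithinAt
    obtain ⟨z, hz, hgz⟩ := intermediate_value_Icc' hyx0.le hgc ⟨hx₀g, hgy.le⟩
    have hξz : ξ < z := lt_of_lt_of_le hξy hz.1
    have hgc2 : ContinuousOn g (Icc ξ z) := fun w hw =>
      (hgd w (by simp only [mem_Ioi]; linarith [hw.1])).continuousAt.continuousWithinAt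
    obtain ⟨m, hm, hmax⟩ := isCompact_Icc.exists_isMaxOn (nonempty_Icc.mpr hξz.le) hgc2
    have hyz : y ∈ Icc ξ z := ⟨hξy.le, hz.1⟩
    have hgm : 0 < g m := lt_of_lt_of_le hgy (hmax hyz)
    have hmξ : m ≠ ξ := by rintro rfl; rw [hgξ] at hgm; exact lt_irrefl 0 hgm
    have hmz : m ≠ z := by rintro rfl; rw [hgz] at hgm; exact lt_irrefl 0 hgm
    have hmIoo : m ∈ Ioo ξ z := ⟨lt_of_le_of_ne hm.1 (Ne.symm hmξ), lt_of_le_of_ne hm.2 hmz⟩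
    have hm0 : m ∈ Ioi (0:ℝ) := lt_trans hξ hmIoo.1
    exact contra m hm0 ⟨hmax.isLocalMax (Icc_mem_nhds hmIoo.1 hmIoo.2), hgm⟩
  -- left of ξ
  have left : ∀ x, 0 < x → x < ξ → g x < 0 := by
    by_contra hcon
    push_neg at hcon
    obtain ⟨x₀, hx₀, hx₀ξ, hx₀g⟩ := hcon
    obtain ⟨l, hl, H3⟩ := mem_nhdsLT_iff_exists_Ioo_subset.mp hsL
    set y := (max l x₀ + ξ)/2 with hy
    have hmax' : max l x₀ < ξ := max_lt hl hx₀ξ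
    have hyξ : y < ξ := by simp only [hy]; linarith
    have hly : l < y := by have := le_max_left l x₀; simp only [hy]; linarith
    have hx₀y : x₀ < y := by have := le_max_right l x₀; simp only [hy]; linarith
    have hgy : g y < 0 := H3 ⟨hly, hyξ⟩
    have hgc : ContinuousOn g (Icc x₀ y) := fun z hz =>
      (hgd z (by simp only [mem_Ioi]; linarith [hz.1])).continuousAt.continuousWithinAt
    obtain ⟨z, hz, hgz⟩ := intermediate_value_Icc' hx₀y.le hgc ⟨hgy.le, hx₀g⟩
    have hzξ : z < ξ := lt_of_le_of_lt hz.2 hyξ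
    have hz0 : 0 < z := lt_of_lt_of_le hx₀ hz.1
    have hgc2 : ContinuousOn g (Icc z ξ) := fun w hw =>
      (hgd w (by simp only [mem_Ioi]; linarith [hw.1])).continuousAt.continuousWithinAt
    obtain ⟨m, hm, hmin⟩ := isCompact_Icc.exists_isMinOn (nonempty_Icc.mpr hzξ.le) hgc2
    have hyz : y ∈ Icc z ξ := ⟨hz.2, hyξ.le⟩
    have hgm : g m < 0 := lt_of_le_of_lt (hmin hyz) hgy
    have hmz : m ≠ z := by rintro rfl; rw [hgz] at hgm; exact lt_irrefl 0 hgm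
    have hmξ : m ≠ ξ := by rintro rfl; rw [hgξ] at hgm; exact lt_irrefl 0 hgm
    have hmIoo : m ∈ Ioo z ξ := ⟨lt_of_le_of_ne hm.1 (Ne.symm hmz), lt_of_le_of_ne hm.2 hmξ⟩
    have hm0 : m ∈ Ioi (0:ℝ) := lt_trans hz0 hmIoo.1
    exact contra' m hm0 ⟨hmin.isLocalMin (Icc_mem_nhds hmIoo.1 hmIoo.2), hgm⟩
  exact ⟨fun x hx => sub_pos.mp (right x hx),
    fun x hx1 hx2 => sub_neg.mp (left x hx1 hx2)⟩
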